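/- If v = Σ_{S ∈ supp(v)} λ_S v_S is a vector in V with all λ_S nonzero, then v_S lies in the B_n-submodule generated by v, for every S in supp(v). -/

import Mathlib

open Finset

/-- `f : Fin n → Option (Fin n)` represents an injective partial map of `{1,…,n}`
(elements 0-indexed): `f a = some x` means `a ∈ D(f)` with image `x`. Injectivity: -/
def IsPartialInj {n : ℕ} (f : Fin n → Option (Fin n)) : Prop :=
  ∀ a b x, f a = some x → f b = some x → a = b

/-- order preserving: `a < b` in the domain implies `f a < f b`. -/
def IsOrderPres {n : ℕ} (f : Fin n → Option (Fin n)) : Prop :=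
  ∀ a b x y, a < b → f a = some x → f b = some y → x < y

/-- order decreasing: `f a ≤ a` on the domain. -/
def IsOrderDec {n : ℕ} (f : Fin n → Option (Fin n)) : Prop :=
  ∀ a x, f a = some x → x ≤ a

/-- The planar upper triangular rook monoid `B_n`: order-preserving,
order-decreasing injective partial maps of `{1,…,n}`. -/
def Bn (n : ℕ) : Set (Fin n → Option (Fin n)) :=
  {f | IsPartialInj f ∧ IsOrderPres f ∧ IsOrderDec f}

/-- domain of the partial map. -/
def domf {n : ℕ} (f : Fin n → Option (Fin n)) : Finset (Fin n) :=
  Finset.univ.filter (fun a => (f a).isSome)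

/-- image of a finite set under the partial map. -/
def fimg {n : ℕ} (f : Fin n → Option (Fin n)) (S : Finset (Fin n)) : Finset (Fin n) :=
  S.biUnion (fun a => (f a).toFinset)

/-- the linear action of a partial map `f` on `V = ⊕_{S ⊆ n} F·v_S`:
`f · v_S = v_{f(S)}` if `S ⊆ D(f)`, and `0` otherwise. -/
noncomputable def actMap (F : Type*) [Field F] {n : ℕ} (f : Fin n → Option (Fin n)) :
    (Finset (Fin n) →₀ F) →ₗ[F] (Finset (Fin n) →₀ F) :=
  Finsupp.lsum F (fun S => if S ⊆ domf f then Finsupp.lsingle (fimg f S) else 0)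

/-- a subspace `W` of `V` is a `B_n`-submodule if it is invariant under the action. -/
def IsBnSub {n : ℕ} {F : Type*} [Field F] (W : Submodule F (Finset (Fin n) →₀ F)) : Prop :=
  ∀ f ∈ Bn n, ∀ v ∈ W, actMap F f v ∈ W

/-- the `B_n`-submodule of `V` generated by a vector `v`. -/
noncomputable def genMod (F : Type*) [Field F] {n : ℕ} (v : Finset (Fin n) →₀ F) :
    Submodule F (Finset (Fin n) →₀ F) :=
  sInf {W | IsBnSub W ∧ v ∈ W}

/-- restriction of the identity to `A`. -/
def resMap {n : ℕ} (A : Finset (Fin n)) : Fin n → Option (Fin n) :=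
  fun a => if a ∈ A then some a else none

lemma resMap_mem_Bn {n : ℕ} (A : Finset (Fin n)) : resMap A ∈ Bn n := by
  refine ⟨?_, ?_, ?_⟩
  · intro a b x ha hb
    simp only [resMap] at ha hb
    split_ifs at ha hb <;> simp_all
  · intro a b x y hab ha hb
    simp only [resMap] at ha hb
    split_ifs at ha hb <;> simp_all
  · intro a x ha
    simp only [resMap] at ha
    split_ifs at ha <;> simp_all

lemma domf_resMap {n : ℕ} (A : Finset (Fin n)) : domf (resMap A) = A := by
  ext a
  simp only [domf, resMap, mem_filter, mem_univ, true_and]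
  by_cases h : a ∈ A <;> simp [h]

lemma fimg_resMap {n : ℕ} {A T : Finset (Fin n)} (hT : T ⊆ A) : fimg (resMap A) T = T := by
  ext x
  simp only [fimg, resMap, mem_biUnion]
  constructor
  · rintro ⟨a, ha, hx⟩
    rw [if_pos (hT ha)] at hx
    simp only [Option.toFinset_some, mem_singleton] at hx
    exact hx ▸ ha
  · intro hx
    exact ⟨x, hx, by rw [if_pos (hT hx)]; simp⟩

lemma actMap_resMap (F : Type*) [Field F] {n : ℕ} (A : Finset (Fin n))
    (v : Finset (Fin n) →₀ F) :
    actMap F (resMap A) v = ∑ T ∈ v.support, if T ⊆ A then Finsupp.single T (v T) else 0 := by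
  rw [actMap, Finsupp.lsum_apply, Finsupp.sum]
  refine Finset.sum_congr rfl fun T _ => ?_
  rw [domf_resMap]
  split_ifs with h
  · rw [fimg_resMap h]; rfl
  · rfl

lemma alt_sum (F : Type*) [Field F] [CharZero F] {α : Type*} [DecidableEq α]
    (S T : Finset α) :
    ∑ A ∈ S.powerset.filter (fun A => T ⊆ A), (-1 : F) ^ A.card
      = if T = S then (-1 : F) ^ S.card else 0 := by
  by_cases hTS : T ⊆ S
  · have key : ∑ A ∈ S.powerset.filter (fun A => T ⊆ A), (-1 : F) ^ A.card
        = ∑ B ∈ (S \ T).powerset, (-1 : F) ^ (B.card + T.card) := by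
      refine Finset.sum_nbij' (fun A => A \ T) (fun B => B ∪ T) ?_ ?_ ?_ ?_ ?_
      · intro A hA
        simp only [mem_filter, mem_powerset] at hA
        exact mem_powerset.2 (sdiff_subset_sdiff hA.1 le_rfl)
      · intro B hB
        simp only [mem_powerset] at hB
        simp only [mem_filter, mem_powerset]
        exact ⟨union_subset (hB.trans sdiff_subset) hTS, subset_union_right⟩
      · intro A hA
        simp only [mem_filter, mem_powerset] at hA
        exact sdiff_union_of_subset hA.2
      · intro B hB
        simp only [mem_powerset] at hB
        have hd : Disjoint B T := fun u hu1 hu2 x hx =>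
          absurd (hu2 hx) (mem_sdiff.1 (hB (hu1 hx))).2
        ext x
        simp only [mem_sdiff, mem_union]
        constructor
        · rintro ⟨h1 | h1, h2⟩
          · exact h1
          · exact absurd h1 h2
        · intro hx
          exact ⟨Or.inl hx, fun hxT => (Finset.disjoint_left.1 hd hx) hxT⟩
      · intro A hA
        simp only [mem_filter, mem_powerset] at hA
        rw [← Finset.card_sdiff_add_card_eq_card hA.2]
    rw [key]
    have hz : ∑ B ∈ (S \ T).powerset, (-1 : F) ^ B.card
        = if S \ T = ∅ then (1 : F) else 0 := by
      have hZ := @Finset.sum_powerset_neg_one_pow_card α _ (S \ T)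
      have : ((∑ B ∈ (S \ T).powerset, (-1 : ℤ) ^ B.card : ℤ) : F)
          = ∑ B ∈ (S \ T).powerset, (-1 : F) ^ B.card := by push_cast; rfl
      rw [← this, hZ]
      split_ifs <;> simp
    simp_rw [pow_add]
    rw [← Finset.sum_mul, hz]
    by_cases hTeq : T = S
    · rw [if_pos hTeq, if_pos (by simp [hTeq]), hTeq, one_mul]
    · rw [if_neg hTeq, if_neg (fun h => hTeq (le_antisymm hTS (by
        intro x hx
        by_contra hxT
        exact absurd (mem_sdiff.2 ⟨hx, hxT⟩) (by simp [h])))), zero_mul]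
  · rw [Finset.filter_false_of_mem, Finset.sum_empty, if_neg]
    · exact fun h => hTS (h ▸ le_rfl)
    · intro A hA h
      exact hTS (h.trans (mem_powerset.1 hA))


/-- if `S` is in the support of `v`, then `v_S ∈ B_n v`. -/
theorem single_mem_genMod (n : ℕ) (F : Type*) [Field F] [CharZero F]
    (v : Finset (Fin n) →₀ F) (S : Finset (Fin n)) (hS : S ∈ v.support) :
    Finsupp.single S (1 : F) ∈ genMod F v := by
  classical
  have hv : v ∈ genMod F v := Submodule.mem_sInf.2 fun W hW => hW.2
  have hsub : ∀ f ∈ Bn n, ∀ u ∈ genMod F v, actMap F f u ∈ genMod F v := by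
    intro f hf u hu
    exact Submodule.mem_sInf.2 fun W hW => hW.1 f hf u (Submodule.mem_sInf.1 hu W hW)
  set w : Finset (Fin n) →₀ F :=
    ∑ A ∈ S.powerset, ((-1 : F) ^ A.card) • actMap F (resMap A) v with hw
  have hwmem : w ∈ genMod F v :=
    Submodule.sum_mem _ fun A _ =>
      Submodule.smul_mem _ _ (hsub _ (resMap_mem_Bn A) v hv)
  have hweq : w = ((-1 : F) ^ S.card) • Finsupp.single S (v S) := by
    rw [hw]
    simp_rw [actMap_resMap, Finset.smul_sum]
    rw [Finset.sum_comm]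
    have step : ∀ T ∈ v.support,
        ∑ A ∈ S.powerset, ((-1 : F) ^ A.card) • (if T ⊆ A then Finsupp.single T (v T) else 0)
          = (if T = S then ((-1 : F) ^ S.card) else 0) • Finsupp.single T (v T) := by
      intro T _
      have : ∀ A : Finset (Fin n),
          ((-1 : F) ^ A.card) • (if T ⊆ A then Finsupp.single T (v T) else 0)
            = (if T ⊆ A then ((-1 : F) ^ A.card) else 0) • Finsupp.single T (v T) := by
        intro A; split_ifs <;> simp
      simp_rw [this, ← Finset.sum_smul, Finset.sum_ite, Finset.sum_const_zero, add_zero,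
        alt_sum F S T]
    rw [Finset.sum_congr rfl step]
    have : ∀ T : Finset (Fin n),
        (if T = S then ((-1 : F) ^ S.card) else 0) • Finsupp.single T (v T)
          = if T = S then ((-1 : F) ^ S.card) • Finsupp.single T (v T) else 0 := by
      intro T; split_ifs <;> simp
    simp_rw [this]
    rw [Finset.sum_ite_eq' v.support S (fun T => ((-1 : F) ^ S.card) • Finsupp.single T (v T)),
      if_pos hS]
  have hc : ((-1 : F) ^ S.card * v S) ≠ 0 :=
    mul_ne_zero (pow_ne_zero _ (by norm_num)) (Finsupp.mem_support_iff.1 hS)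
  have hfinal : Finsupp.single S (1 : F) = ((-1 : F) ^ S.card * v S)⁻¹ • w := by
    rw [hweq, smul_smul, Finsupp.smul_single', mul_assoc, inv_mul_cancel₀ hc]
  rw [hfinal]
  exact Submodule.smul_mem _ _ hwmem
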